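/- arXiv:2405.00295 — 2 statements merged into one kernel-verified Lean document; each statement's English description precedes it below -/
import Mathlib

section
/- In the PoSP protocol with n validators, a validator that does not collude with the asserter has a strict dominant strategy to output the correct result. Precisely: let n be a positive integer and let R_V, C, S be real numbers with S > n·C and R_V/n − C > −S. Suppose the validator's payoffs satisfy: u_hc ≥ R_V/n − C when the validator is correct and the asserter is correct; u_hi ≥ R_V/n − C + S/n when the validator is correct and the asserter is incorrect; u_dc = −S when the validator is incorrect and the asserter is correct; u_di ≤ R_V/n when the validator is incorrect and the asserter is incorrect. Then u_hc > u_dc and u_hi > u_di, i.e., outputting the correct result yields a strictly higher payoff against every strategy of the asserter. -/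
/-- A non-colluding validator in the PoSP protocol with `n` validators has a
strict dominant strategy to output the correct result. -/
theorem posp_validator_dominant_strategy
    (n : ℕ) (hn : 0 < n)
    (R_V C S : ℝ)
    (hS : S > n * C)
    (hRV : R_V / n - C > -S)
    (u_hc u_hi u_dc u_di : ℝ)
    (h_hc : u_hc ≥ R_V / n - C)
    (h_hi : u_hi ≥ R_V / n - C + S / n)
    (h_dc : u_dc = -S)
    (h_di : u_di ≤ R_V / n) :
    u_hc > u_dc ∧ u_hi > u_di := by
  have hn' : (0:ℝ) < n := by exact_mod_cast hn
  have hSC : S / n > C := by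
    rw [gt_iff_lt, lt_div_iff₀ hn']; nlinarith
  constructor
  · linarith
  · linarith
end

section
/- (Main theorem, payoff form.) Let n be a positive integer, p, ρ, r ∈ [0,1] with ρ ≤ r, and let R_A, R_V, C, S, U_1, U_2 be real numbers with R_V ≥ 0 and U_2 + S ≥ 0. Let E_0, E_1, …, E_n be nonnegative real numbers and set E = Σ_{i=0}^{n} C(n,i)·ρ^i·(1−ρ)^{n−i}·E_i. If R_A + p·S − (1−p)·U_1 − C > p·r^n·(U_2 + S), then the honest asserter's expected payoff strictly exceeds the upper bound on the dishonest asserter's expected payoff: (1−p)(R_A − C) + p((R_V/n)·E + R_A − C) > (1−p)·U_1 + p·ρ^n·U_2 + p·Σ_{i=0}^{n−1} C(n,i)·ρ^i·(1−ρ)^{n−i}·((R_V/n)·E_i − S). -/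
open Finset in
/-- Main theorem of the PoSP protocol, payoff form: if the sufficient condition
holds, the honest asserter's expected payoff strictly exceeds the upper bound on
the dishonest asserter's expected payoff. -/
theorem posp_main_theorem
    (n : ℕ) (hn : 0 < n)
    (p ρ r : ℝ)
    (hp : p ∈ Set.Icc (0:ℝ) 1) (hρ : ρ ∈ Set.Icc (0:ℝ) 1)
    (hr : r ∈ Set.Icc (0:ℝ) 1) (hρr : ρ ≤ r)
    (R_A R_V C S U₁ U₂ : ℝ) (hRV : 0 ≤ R_V) (hU2S : 0 ≤ U₂ + S)
    (E : ℕ → ℝ) (hE : ∀ i, 0 ≤ E i) (Ek : ℝ)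
    (hEk : Ek = ∑ i ∈ range (n + 1),
      (n.choose i : ℝ) * ρ ^ i * (1 - ρ) ^ (n - i) * E i)
    (hcond : R_A + p * S - (1 - p) * U₁ - C > p * r ^ n * (U₂ + S)) :
    (1 - p) * (R_A - C) + p * ((R_V / n) * Ek + R_A - C) >
      (1 - p) * U₁ + p * ρ ^ n * U₂ +
        p * ∑ i ∈ range n,
          (n.choose i : ℝ) * ρ ^ i * (1 - ρ) ^ (n - i) * ((R_V / n) * E i - S) := by
  have hsum1 : ∑ i ∈ range (n + 1),
      (n.choose i : ℝ) * ρ ^ i * (1 - ρ) ^ (n - i) = 1 := by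
    have h2 : ∑ i ∈ range (n + 1),
        (n.choose i : ℝ) * ρ ^ i * (1 - ρ) ^ (n - i) = (ρ + (1 - ρ)) ^ n := by
      rw [add_pow ρ (1 - ρ) n]
      exact Finset.sum_congr rfl fun i _ => by ring
    rw [h2]
    simp
  -- split off the last term of the binomial sums
  have hsplit : ∑ i ∈ range n,
      (n.choose i : ℝ) * ρ ^ i * (1 - ρ) ^ (n - i) = 1 - ρ ^ n := by
    have := Finset.sum_range_succ
      (fun i => (n.choose i : ℝ) * ρ ^ i * (1 - ρ) ^ (n - i)) n
    rw [this] at hsum1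
    simp at hsum1
    linarith
  have hEksplit : Ek = (∑ i ∈ range n,
      (n.choose i : ℝ) * ρ ^ i * (1 - ρ) ^ (n - i) * E i) + ρ ^ n * E n := by
    rw [hEk, Finset.sum_range_succ]
    simp
  have hdist : ∑ i ∈ range n,
      (n.choose i : ℝ) * ρ ^ i * (1 - ρ) ^ (n - i) * ((R_V / n) * E i - S)
      = (R_V / n) * (∑ i ∈ range n,
          (n.choose i : ℝ) * ρ ^ i * (1 - ρ) ^ (n - i) * E i)
        - S * (1 - ρ ^ n) := by
    rw [← hsplit, Finset.mul_sum, Finset.mul_sum, ← Finset.sum_sub_distrib]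
    exact Finset.sum_congr rfl fun i _ => by ring
  have hρn : ρ ^ n ≤ r ^ n := pow_le_pow_left₀ hρ.1 hρr n
  have h1 : 0 ≤ p * (r ^ n - ρ ^ n) * (U₂ + S) :=
    mul_nonneg (mul_nonneg hp.1 (by linarith)) hU2S
  have h2 : 0 ≤ p * ((R_V / n) * (ρ ^ n * E n)) := by
    have hn0 : (0:ℝ) ≤ (n : ℝ) := Nat.cast_nonneg n
    have : 0 ≤ R_V / n := div_nonneg hRV hn0
    have hρn0 : 0 ≤ ρ ^ n := pow_nonneg hρ.1 n
    exact mul_nonneg hp.1 (mul_nonneg this (mul_nonneg hρn0 (hE n)))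
  rw [hdist, hEksplit]
  nlinarith [hcond, h1, h2]
end
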